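/- In the adjoint Lie algebra of M_{1,1}(E) over a field of characteristic p > 2, the identity [x,y,x^(p-1),y^(p-1),v] = 0 holds for all elements (x repeated p-1 times then y repeated p-1 times, left-normalized). -/

import Mathlib

/-- The Grassmann (exterior) algebra over `F` on countably many generators. -/
abbrev GrAlg (F : Type) [Field F] := ExteriorAlgebra F (ℕ →₀ F)

/-- The `i`-th Grassmann generator `e_i`. -/
noncomputable def gen (F : Type) [Field F] (i : ℕ) : GrAlg F :=
  ExteriorAlgebra.ι F (Finsupp.single i (1 : F))

/-- The submodule of generators (degree-one part). -/
noncomputable def grange (F : Type) [Field F] : Submodule F (GrAlg F) :=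
  LinearMap.range (ExteriorAlgebra.ι F : (ℕ →₀ F) →ₗ[F] GrAlg F)

/-- The even part `E^1_0` of the unital Grassmann algebra: span of `1` and
products of even length. -/
noncomputable def evenPart1 (F : Type) [Field F] : Submodule F (GrAlg F) :=
  ⨆ n : ℕ, (grange F) ^ (2 * n)

/-- The even part `E_0` of the non-unital Grassmann algebra: span of
products of even positive length. -/
noncomputable def evenPart (F : Type) [Field F] : Submodule F (GrAlg F) :=
  ⨆ n : ℕ, (grange F) ^ (2 * (n + 1))

/-- The odd part `E_1`: span of products of odd length. -/
noncomputable def oddPart (F : Type) [Field F] : Submodule F (GrAlg F) :=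
  ⨆ n : ℕ, (grange F) ^ (2 * n + 1)

/-- The set of matrices of `M_{1,1}`: diagonal entries in `D`, off-diagonal
entries in the odd part. -/
def M11carrier (F : Type) [Field F] (D : Submodule F (GrAlg F)) :
    Set (Matrix (Fin 2) (Fin 2) (GrAlg F)) :=
  {A | A 0 0 ∈ D ∧ A 1 1 ∈ D ∧ A 0 1 ∈ oddPart F ∧ A 1 0 ∈ oddPart F}

/-- Left-normalized Lie bracket (commutator in the matrix ring):
`lnb x [a₁,…,aₙ] = [[…[x,a₁],…],aₙ]`. -/
def lnb {L : Type*} [LieRing L] (x : L) (l : List L) : L :=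
  l.foldl (fun a b => ⁅a, b⁆) x

attribute [local instance] LieRing.ofAssociativeRing

namespace Stmt18Aux
set_option maxHeartbeats 1000000
variable {F : Type} [Field F]

lemma grange_anticomm {u w : GrAlg F} (hu : u ∈ grange F) (hw : w ∈ grange F) :
    u * w = -(w * u) := by
  obtain ⟨a, rfl⟩ := hu; obtain ⟨b, rfl⟩ := hw
  exact eq_neg_of_add_eq_zero_left (ExteriorAlgebra.ι_add_mul_swap a b)

lemma grange_sq_zero {u : GrAlg F} (hu : u ∈ grange F) : u * u = 0 := by
  obtain ⟨a, rfl⟩ := hu; exact ExteriorAlgebra.ι_sq_zero a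

/-- centrality submodule -/
noncomputable def cenM (F : Type) [Field F] : Submodule F (GrAlg F) :=
  Subalgebra.toSubmodule (Subalgebra.center F (GrAlg F))

lemma mem_cenM {e : GrAlg F} (h : e ∈ cenM F) (z : GrAlg F) : e * z = z * e :=
  (((Subalgebra.mem_center_iff (R := F)).mp h) z).symm

lemma pair_cen {u w : GrAlg F} (hu : u ∈ grange F) (hw : w ∈ grange F) :
    u * w ∈ cenM F := by
  rw [cenM, Subalgebra.mem_toSubmodule, Subalgebra.mem_center_iff (R := F)]
  intro z
  induction z using ExteriorAlgebra.induction with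
  | algebraMap r => exact (Algebra.commutes r _)
  | ι m =>
    have hm : ExteriorAlgebra.ι F m ∈ grange F := LinearMap.mem_range_self _ m
    have h1 : w * ExteriorAlgebra.ι F m = -(ExteriorAlgebra.ι F m * w) :=
      grange_anticomm hw hm
    have h2 : u * ExteriorAlgebra.ι F m = -(ExteriorAlgebra.ι F m * u) :=
      grange_anticomm hu hm
    have h2' : ExteriorAlgebra.ι F m * u = -(u * ExteriorAlgebra.ι F m) := by
      rw [h2, neg_neg]
    have e1 : ExteriorAlgebra.ι F m * (u * w)
        = -(u * (ExteriorAlgebra.ι F m * w)) := by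
      rw [← mul_assoc, h2', neg_mul, mul_assoc]
    have e2 : u * w * ExteriorAlgebra.ι F m
        = -(u * (ExteriorAlgebra.ι F m * w)) := by
      rw [mul_assoc, h1, mul_neg]
    rw [e1, e2]
  | mul a b ha hb =>
    calc a * b * (u * w) = a * (b * (u * w)) := by rw [mul_assoc]
      _ = a * (u * w * b) := by rw [hb]
      _ = a * (u * w) * b := by rw [← mul_assoc]
      _ = u * w * a * b := by rw [ha]
      _ = u * w * (a * b) := by rw [mul_assoc]
  | add a b ha hb => rw [add_mul, mul_add, ha, hb]

lemma grange_pow_even_le_cenM (n : ℕ) : grange F ^ (2 * n) ≤ cenM F := by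
  induction n with
  | zero =>
    rw [Nat.mul_zero, pow_zero]
    rw [Submodule.one_le]
    exact Subalgebra.one_mem _
  | succ n ih =>
    have : 2 * (n + 1) = 2 * n + 2 := by ring
    rw [this, pow_add, pow_two]
    refine Submodule.mul_le.mpr fun u hu w hw => ?_
    have hw' : w ∈ cenM F := by
      refine Submodule.mul_le.mpr (fun a ha b hb => pair_cen ha hb) hw
    have hu' := ih hu
    exact Subalgebra.mul_mem _ hu' hw'

lemma evenPart_le_cenM : evenPart F ≤ cenM F := by
  refine iSup_le fun n => grange_pow_even_le_cenM (n + 1)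

lemma even_cen {e : GrAlg F} (h : e ∈ evenPart F) (z : GrAlg F) : e * z = z * e :=
  mem_cenM (evenPart_le_cenM h) z


lemma odd_mul_gen {u : GrAlg F} (hu : u ∈ oddPart F) {g : GrAlg F} (hg : g ∈ grange F) :
    u * g = -(g * u) := by
  refine Submodule.iSup_induction (motive := fun u => u * g = -(g * u)) _ hu ?_ (by simp) ?_
  · intro n x hx
    rw [pow_succ] at hx
    refine Submodule.mul_induction_on hx ?_ ?_
    · intro e he h hh
      have hec : ∀ z, e * z = z * e := fun z => mem_cenM (grange_pow_even_le_cenM n he) z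
      have h1 : h * g = -(g * h) := grange_anticomm hh hg
      calc e * h * g = e * (h * g) := by rw [mul_assoc]
        _ = e * (-(g * h)) := by rw [h1]
        _ = -(e * (g * h)) := by rw [mul_neg]
        _ = -((e * g) * h) := by rw [mul_assoc]
        _ = -((g * e) * h) := by rw [hec g]
        _ = -(g * (e * h)) := by rw [mul_assoc]
    · intro a b ha hb
      rw [add_mul, mul_add, ha, hb, neg_add]
  · intro a b ha hb
    rw [add_mul, mul_add, ha, hb, neg_add]

lemma odd_anticomm {u w : GrAlg F} (hu : u ∈ oddPart F) (hw : w ∈ oddPart F) :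
    u * w = -(w * u) := by
  refine Submodule.iSup_induction (motive := fun w => u * w = -(w * u)) _ hw ?_ (by simp) ?_
  · intro n x hx
    rw [pow_succ] at hx
    refine Submodule.mul_induction_on hx ?_ ?_
    · intro e he g hg
      have hec : ∀ z, e * z = z * e := fun z => mem_cenM (grange_pow_even_le_cenM n he) z
      have h1 : u * g = -(g * u) := odd_mul_gen hu hg
      calc u * (e * g) = (u * e) * g := by rw [mul_assoc]
        _ = (e * u) * g := by rw [hec u]
        _ = e * (u * g) := by rw [mul_assoc]
        _ = e * (-(g * u)) := by rw [h1]
        _ = -(e * (g * u)) := by rw [mul_neg]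
        _ = -((e * g) * u) := by rw [mul_assoc]
    · intro a b ha hb
      rw [mul_add, add_mul, ha, hb, neg_add]
  · intro a b ha hb
    rw [mul_add, add_mul, ha, hb, neg_add]

lemma odd_sq_zero (h2 : (2 : F) ≠ 0) {u : GrAlg F} (hu : u ∈ oddPart F) : u * u = 0 := by
  have h := odd_anticomm hu hu
  have h' : (2 : F) • (u * u) = 0 := by
    rw [two_smul]
    nth_rewrite 1 [h]
    exact neg_add_cancel _
  rcases smul_eq_zero.mp h' with h | h
  · exact absurd h h2
  · exact h

/-- generic product-membership helper for graded parts -/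
lemma mul_mem_part {u w : GrAlg F} {f g h : ℕ → ℕ}
    (hu : u ∈ ⨆ n : ℕ, grange F ^ f n) (hw : w ∈ ⨆ n : ℕ, grange F ^ g n)
    (H : ∀ m n : ℕ, ∃ k, f m + g n = h k) :
    u * w ∈ ⨆ n : ℕ, grange F ^ h n := by
  refine Submodule.iSup_induction (motive := fun u => u * w ∈ ⨆ n : ℕ, grange F ^ h n) _ hu ?_
    (by show (0 : GrAlg F) * w ∈ _; rw [zero_mul]; exact Submodule.zero_mem _) ?_
  · intro m x hx
    refine Submodule.iSup_induction (motive := fun w => x * w ∈ ⨆ n : ℕ, grange F ^ h n) _ hw ?_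
      (by show x * (0 : GrAlg F) ∈ _; rw [mul_zero]; exact Submodule.zero_mem _) ?_
    · intro n y hy
      obtain ⟨k, hk⟩ := H m n
      have : x * y ∈ grange F ^ f m * grange F ^ g n := Submodule.mul_mem_mul hx hy
      rw [← pow_add, hk] at this
      exact Submodule.mem_iSup_of_mem k this
    · intro a b ha hb
      rw [mul_add]; exact Submodule.add_mem _ ha hb
  · intro a b ha hb
    rw [add_mul]; exact Submodule.add_mem _ ha hb

lemma odd_mul_odd_even {u w : GrAlg F} (hu : u ∈ oddPart F) (hw : w ∈ oddPart F) :
    u * w ∈ evenPart F :=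
  mul_mem_part hu hw (fun m n => ⟨m + n, by ring⟩)

lemma even_mul_odd_odd {e u : GrAlg F} (he : e ∈ evenPart F) (hu : u ∈ oddPart F) :
    e * u ∈ oddPart F :=
  mul_mem_part he hu (fun m n => ⟨m + n + 1, by ring⟩)

lemma even_mul_even_even {e f : GrAlg F} (he : e ∈ evenPart F) (hf : f ∈ evenPart F) :
    e * f ∈ evenPart F :=
  mul_mem_part he hf (fun m n => ⟨m + n + 1, by ring⟩)


lemma charP_grAlg (p : ℕ) [CharP F p] : CharP (GrAlg F) p :=
  charP_of_injective_algebraMap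
    (ExteriorAlgebra.algebraMap_leftInverse (ℕ →₀ F)).injective p

lemma even_pow_zero (p : ℕ) [CharP F p] (hp : p.Prime) {e : GrAlg F}
    (he : e ∈ evenPart F) : e ^ p = 0 := by
  haveI : Fact p.Prime := ⟨hp⟩
  haveI : CharP (GrAlg F) p := charP_grAlg p
  have hadd : ∀ a b : GrAlg F, a ∈ cenM F ∧ a ^ p = 0 → b ∈ cenM F ∧ b ^ p = 0 →
      (a + b) ∈ cenM F ∧ (a + b) ^ p = 0 := by
    rintro a b ⟨ha1, ha2⟩ ⟨hb1, hb2⟩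
    refine ⟨Submodule.add_mem _ ha1 hb1, ?_⟩
    have hc : Commute a b := mem_cenM ha1 b
    rw [add_pow_expChar_of_commute p hc, ha2, hb2, add_zero]
  have sq_part : ∀ x ∈ grange F * grange F, x ∈ cenM F ∧ x ^ p = 0 := by
    intro x hx
    refine Submodule.mul_induction_on hx ?_ (fun a b => hadd a b)
    intro u hu w hw
    refine ⟨pair_cen hu hw, ?_⟩
    have h1 : w * u = -(u * w) := grange_anticomm hw hu
    have hsq : (u * w) * (u * w) = 0 := by
      calc (u * w) * (u * w) = u * ((w * u) * w) := by
            rw [mul_assoc, ← mul_assoc w u w]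
        _ = u * ((-(u * w)) * w) := by rw [h1]
        _ = -(u * (u * (w * w))) := by rw [neg_mul, mul_neg, mul_assoc]
        _ = -((u * u) * (w * w)) := by rw [← mul_assoc]
        _ = 0 := by rw [grange_sq_zero hu, zero_mul, neg_zero]
    have hp2 : p = 2 + (p - 2) := by have := hp.two_le; omega
    calc (u * w) ^ p = (u * w) ^ 2 * (u * w) ^ (p - 2) := by rw [← pow_add, ← hp2]
      _ = 0 := by rw [pow_two, hsq, zero_mul]
  have key : ∀ n : ℕ, ∀ x ∈ grange F ^ (2 * (n + 1)), x ∈ cenM F ∧ x ^ p = 0 := by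
    intro n
    induction n with
    | zero =>
      intro x hx
      rw [show 2 * (0 + 1) = 2 from rfl, pow_two] at hx
      exact sq_part x hx
    | succ n ih =>
      intro x hx
      rw [show 2 * (n + 1 + 1) = 2 * (n + 1) + 2 from by ring, pow_add, pow_two] at hx
      refine Submodule.mul_induction_on hx ?_ (fun a b => hadd a b)
      intro u hu w hw
      obtain ⟨hu1, hu2⟩ := ih u hu
      obtain ⟨hw1, hw2⟩ := sq_part w hw
      refine ⟨Subalgebra.mul_mem _ hu1 hw1, ?_⟩
      have hc : Commute u w := mem_cenM hu1 w
      rw [hc.mul_pow, hu2, zero_mul]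
  suffices h : e ∈ cenM F ∧ e ^ p = 0 from h.2
  refine Submodule.iSup_induction (motive := fun e => e ∈ cenM F ∧ e ^ p = 0) _ he
    (fun n x hx => key n x hx) ?_ (fun a b => hadd a b)
  exact ⟨Submodule.zero_mem _, zero_pow hp.ne_zero⟩



section MatrixLemmas
variable {R : Type} [Ring R]

noncomputable def Sm (w : R) : Matrix (Fin 2) (Fin 2) R := Matrix.diagonal (fun _ => w)
noncomputable def Jm : Matrix (Fin 2) (Fin 2) R := Matrix.diagonal ![1, -1]
noncomputable def Nm (b c : R) : Matrix (Fin 2) (Fin 2) R := !![0, b; c, 0]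

lemma Sm_mul_Sm (w w' : R) : Sm w * Sm w' = Sm (w * w') := by
  simp [Sm, Matrix.diagonal_mul_diagonal]

lemma Sm_pow (w : R) (n : ℕ) : Sm w ^ n = Sm (w ^ n) := by
  induction n with
  | zero => simp [Sm]
  | succ n ih => rw [pow_succ, ih, Sm_mul_Sm, ← pow_succ]

lemma Sm_comm {w : R} (hw : ∀ z, w * z = z * w) (m : Matrix (Fin 2) (Fin 2) R) :
    Sm w * m = m * Sm w := by
  ext i j
  simp [Sm, Matrix.diagonal_mul, Matrix.mul_diagonal, hw]

lemma Sm_nsmul (k : ℕ) (w : R) : Sm ((k : ℕ) • w) = (k : ℕ) • Sm w := by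
  ext i j
  fin_cases i <;> fin_cases j <;> simp [Sm, Matrix.diagonal]

lemma Jm_mul_Jm : (Jm : Matrix (Fin 2) (Fin 2) R) * Jm = 1 := by
  ext i j
  fin_cases i <;> fin_cases j <;>
    simp [Jm, Matrix.mul_apply, Fin.sum_univ_two, Matrix.diagonal]

lemma Jm_comm_Sm (w : R) : Sm w * Jm = Jm * Sm w := by
  ext i j
  fin_cases i <;> fin_cases j <;>
    simp [Jm, Sm, Matrix.mul_apply, Fin.sum_univ_two, Matrix.diagonal]

lemma B_sq (β b c : R) (hβb : β * b = b * β) (hβc : β * c = c * β)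
    (hcb : c * b = -(b * c)) :
    (Sm β * Jm + Nm b c) * (Sm β * Jm + Nm b c) = Sm (β * β) + Sm (b * c) * Jm := by
  ext i j
  fin_cases i <;> fin_cases j <;>
    simp [Jm, Sm, Nm, Matrix.mul_apply, Fin.sum_univ_two, Matrix.diagonal,
      hβb, hβc, hcb] <;> abel

lemma binom_sq_zero {A : Type} [Ring A] {a b : A} (hc : Commute a b) (hb : b * b = 0) :
    ∀ k : ℕ, (a + b) ^ (k + 1) = a ^ (k + 1) + (k + 1) • (a ^ k * b) := by
  intro k
  induction k with
  | zero => simp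
  | succ k ih =>
    rw [pow_succ, ih, add_mul, mul_add, mul_add, smul_mul_assoc, smul_mul_assoc,
      mul_assoc, mul_assoc, hb, mul_zero, smul_zero, add_zero, ← hc.eq,
      ← mul_assoc, ← pow_succ, ← pow_succ]
    rw [succ_nsmul (a ^ (k+1) * b) (k+1)]
    abel

lemma Jm_mul_Nm (b c : R) : Jm * Nm b c = Nm b (-c) := by
  ext i j
  fin_cases i <;> fin_cases j <;>
    simp [Jm, Nm, Matrix.mul_apply, Fin.sum_univ_two, Matrix.diagonal]

lemma Sm_mul_Nm (w b c : R) : Sm w * Nm b c = Nm (w * b) (w * c) := by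
  ext i j
  fin_cases i <;> fin_cases j <;>
    simp [Sm, Nm, Matrix.mul_apply, Fin.sum_univ_two, Matrix.diagonal]

lemma Nm_neg (b c : R) : Nm b (-c) = Nm b 0 - Nm 0 c := by
  ext i j
  fin_cases i <;> fin_cases j <;> simp [Nm]

lemma Nm_bracket (b c b' c' : R) (h1 : c * b' = -(b' * c)) (h2 : c' * b = -(b * c')) :
    Nm b c * Nm b' c' - Nm b' c' * Nm b c = Sm (b * c' - b' * c) := by
  ext i j
  fin_cases i <;> fin_cases j <;>
    simp [Sm, Nm, Matrix.mul_apply, Fin.sum_univ_two, Matrix.diagonal, h1, h2] <;> abel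

lemma SmJm_mul_SmJm (w w' : R) : Sm w * Jm * (Sm w' * Jm) = Sm (w * w') := by
  ext i j
  fin_cases i <;> fin_cases j <;>
    simp [Sm, Jm, Matrix.mul_apply, Fin.sum_univ_two, Matrix.diagonal]

lemma Nm_zero : (Nm 0 0 : Matrix (Fin 2) (Fin 2) R) = 0 := by
  ext i j
  fin_cases i <;> fin_cases j <;> simp [Nm]

lemma Sm_zero : (Sm 0 : Matrix (Fin 2) (Fin 2) R) = 0 := by
  simp [Sm]

end MatrixLemmas

variable {F : Type} [Field F]

lemma even_pow_mul_mem {β e : GrAlg F} (hβ : β ∈ evenPart F) (he : e ∈ evenPart F) :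
    ∀ m : ℕ, (β * β) ^ m * e ∈ evenPart F := by
  intro m
  induction m generalizing e with
  | zero => simpa using he
  | succ m ih =>
    have h1 : (β * β) ^ (m + 1) * e = (β * β) ^ m * ((β * β) * e) := by
      rw [pow_succ, mul_assoc]
    rw [h1]
    exact ih (even_mul_even_even (even_mul_even_even hβ hβ) he)

lemma pow_p_form (p : ℕ) [CharP F p] (hp2 : 2 < p) (hpp : p.Prime)
    {x : Matrix (Fin 2) (Fin 2) (GrAlg F)} (hx : x ∈ M11carrier F (evenPart F)) :
    ∃ W b₁ c₁ : GrAlg F, (∀ z, W * z = z * W) ∧ b₁ ∈ oddPart F ∧ c₁ ∈ oddPart F ∧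
      x ^ p = Sm W + Nm b₁ c₁ := by
  obtain ⟨ha, hd, hb, hc⟩ := hx
  haveI : Fact p.Prime := ⟨hpp⟩
  haveI : CharP (GrAlg F) p := charP_grAlg p
  have h2 : (2 : F) ≠ 0 := by
    intro h
    have h' := (CharP.cast_eq_zero_iff F p 2).mp h
    have := Nat.le_of_dvd (by norm_num) h'
    omega
  set a := x 0 0 with hadef
  set d := x 1 1 with hddef
  set b := x 0 1 with hbdef
  set c := x 1 0 with hcdef
  set α : GrAlg F := (2 : F)⁻¹ • (a + d) with hα
  set β : GrAlg F := (2 : F)⁻¹ • (a - d) with hβ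
  have hαe : α ∈ evenPart F := Submodule.smul_mem _ _ (Submodule.add_mem _ ha hd)
  have hβe : β ∈ evenPart F := Submodule.smul_mem _ _ (Submodule.sub_mem _ ha hd)
  have hsum : α + β = a := by
    rw [hα, hβ, ← smul_add]
    have h' : a + d + (a - d) = (2 : F) • a := by rw [two_smul]; abel
    rw [h', smul_smul, inv_mul_cancel₀ h2, one_smul]
  have hdiff : α - β = d := by
    rw [hα, hβ, ← smul_sub]
    have h' : a + d - (a - d) = (2 : F) • d := by rw [two_smul]; abel
    rw [h', smul_smul, inv_mul_cancel₀ h2, one_smul]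
  have hdec : x = Sm α + (Sm β * Jm + Nm b c) := by
    ext i j
    fin_cases i <;> fin_cases j <;>
      simp [Sm, Jm, Nm, Matrix.diagonal, Matrix.mul_apply, Fin.sum_univ_two]
    · exact hsum.symm
    · rfl
    · rfl
    · rw [← sub_eq_add_neg]; exact hdiff.symm
  set q := b * c with hq
  have hqe : q ∈ evenPart F := odd_mul_odd_even hb hc
  have hβc : ∀ z, β * z = z * β := even_cen hβe
  have hcb : c * b = -(b * c) := odd_anticomm hc hb
  have hbb : b * b = 0 := odd_sq_zero h2 hb
  have hcc : c * c = 0 := odd_sq_zero h2 hc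
  have hqb : q * b = 0 := by
    calc b * c * b = b * (c * b) := mul_assoc _ _ _
      _ = -(b * (b * c)) := by rw [hcb, mul_neg]
      _ = -(b * b * c) := by rw [mul_assoc]
      _ = 0 := by rw [hbb, zero_mul, neg_zero]
  have hqc0 : q * c = 0 := by
    calc b * c * c = b * (c * c) := mul_assoc _ _ _
      _ = 0 := by rw [hcc, mul_zero]
  have hqq : q * q = 0 := by
    nth_rewrite 2 [hq]
    rw [← mul_assoc, hqb, zero_mul]
  set B := Sm β * Jm + Nm b c with hB
  have hcomm : Commute (Sm α) B := Sm_comm (even_cen hαe) B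
  have hxp : x ^ p = B ^ p := by
    rw [hdec, add_pow_expChar_of_commute p hcomm, Sm_pow,
      even_pow_zero p hpp hαe, Sm_zero, zero_add]
  set k := p / 2 with hk
  have hpk : p = 2 * k + 1 := by
    have hodd : p % 2 = 1 := Nat.odd_iff.mp (hpp.odd_of_ne_two (by omega))
    omega
  have hk1 : k = (k - 1) + 1 := by omega
  have hB2 : B * B = Sm (β * β) + Sm q * Jm := B_sq β b c (hβc b) (hβc c) hcb
  have hcomm2 : Commute (Sm (β * β)) (Sm q * Jm) :=
    Sm_comm (even_cen (even_mul_even_even hβe hβe)) _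
  have hsqz : Sm q * Jm * (Sm q * Jm) = 0 := by
    rw [SmJm_mul_SmJm, hqq, Sm_zero]
  set u : GrAlg F := (β * β) ^ k with hu
  set vq : GrAlg F := (β * β) ^ (k - 1) * q with hvq
  have hB2k : (B * B) ^ k = Sm u + k • (Sm vq * Jm) := by
    nth_rewrite 1 [hk1]
    rw [hB2, binom_sq_zero hcomm2 hsqz (k - 1)]
    rw [Sm_pow, Sm_pow, ← mul_assoc, Sm_mul_Sm, ← hk1]
  have hBp : B ^ p = (B * B) ^ k * B := by
    rw [hpk, pow_succ, pow_mul, pow_two]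
  have huβ : u * β = 0 := by
    have : u * β = β ^ p := by
      rw [hu, ← pow_two, ← pow_mul, ← pow_succ, ← hpk]
    rw [this, even_pow_zero p hpp hβe]
  have hvqb : vq * b = 0 := by rw [hvq, mul_assoc, hqb, mul_zero]
  have hvqc : vq * c = 0 := by rw [hvq, mul_assoc, hqc0, mul_zero]
  have hfin : B ^ p = Sm (k • (vq * β)) + Nm (u * b) (u * c) := by
    have t1 : Sm u * B = Nm (u * b) (u * c) := by
      rw [hB, mul_add, ← mul_assoc, Sm_mul_Sm, huβ, Sm_zero, zero_mul, zero_add,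
        Sm_mul_Nm]
    have t2 : Sm vq * Jm * B = Sm (vq * β) := by
      rw [hB, mul_add, SmJm_mul_SmJm, mul_assoc (Sm vq) Jm (Nm b c), Jm_mul_Nm, Sm_mul_Nm, hvqb,
        mul_neg, hvqc, neg_zero, Nm_zero, add_zero]
    rw [hBp, hB2k, add_mul, smul_mul_assoc, t1, t2, Sm_nsmul, add_comm]
  have hββe : β * β ∈ evenPart F := even_mul_even_even hβe hβe
  have hvqe : vq ∈ evenPart F := even_pow_mul_mem hβe hqe (k - 1)
  have hvqβe : vq * β ∈ evenPart F := even_mul_even_even hvqe hβe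
  have hue : u ∈ evenPart F := by
    have h' : u = (β * β) ^ (k - 1) * (β * β) := by rw [hu, ← pow_succ, ← hk1]
    rw [h']
    exact even_pow_mul_mem hβe hββe (k - 1)
  refine ⟨k • (vq * β), u * b, u * c, ?_, even_mul_odd_odd hue hb,
    even_mul_odd_odd hue hc, ?_⟩
  · intro z
    calc (k • (vq * β)) * z = k • ((vq * β) * z) := smul_mul_assoc _ _ _
      _ = k • (z * (vq * β)) := by rw [even_cen hvqβe z]
      _ = z * (k • (vq * β)) := (mul_smul_comm _ _ _).symm
  · rw [hxp, hfin]

lemma central_bracket {s : GrAlg F} (hs : ∀ z, s * z = z * s)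
    (v : Matrix (Fin 2) (Fin 2) (GrAlg F)) : ⁅Sm s, v⁆ = 0 := by
  rw [Ring.lie_def, Sm_comm hs, sub_self]

lemma lie_pow_pow (p : ℕ) [CharP F p] (hp2 : 2 < p) (hpp : p.Prime)
    {x y : Matrix (Fin 2) (Fin 2) (GrAlg F)}
    (hx : x ∈ M11carrier F (evenPart F)) (hy : y ∈ M11carrier F (evenPart F)) :
    ∃ s : GrAlg F, (∀ z, s * z = z * s) ∧ ⁅x ^ p, y ^ p⁆ = Sm s := by
  obtain ⟨W, b₁, c₁, hWc, hb₁, hc₁, hx'⟩ := pow_p_form p hp2 hpp hx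
  obtain ⟨W', b₁', c₁', hW'c, hb', hc', hy'⟩ := pow_p_form p hp2 hpp hy
  refine ⟨b₁ * c₁' - b₁' * c₁, ?_, ?_⟩
  · intro z
    have h1 := even_cen (odd_mul_odd_even hb₁ hc') z
    have h2 := even_cen (odd_mul_odd_even hb' hc₁) z
    rw [sub_mul, mul_sub, h1, h2]
  · rw [Ring.lie_def, hx', hy']
    have hcb' : c₁ * b₁' = -(b₁' * c₁) := odd_anticomm hc₁ hb'
    have hc'b : c₁' * b₁ = -(b₁ * c₁') := odd_anticomm hc' hb₁
    have e0 : ∀ m : Matrix (Fin 2) (Fin 2) (GrAlg F), Sm W * m = m * Sm W :=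
      Sm_comm hWc
    have e0' : ∀ m : Matrix (Fin 2) (Fin 2) (GrAlg F), Sm W' * m = m * Sm W' :=
      Sm_comm hW'c
    have expand : (Sm W + Nm b₁ c₁) * (Sm W' + Nm b₁' c₁')
        - (Sm W' + Nm b₁' c₁') * (Sm W + Nm b₁ c₁)
        = Nm b₁ c₁ * Nm b₁' c₁' - Nm b₁' c₁' * Nm b₁ c₁ := by
      have p1 : (Sm W + Nm b₁ c₁) * (Sm W' + Nm b₁' c₁')
          = Sm W * Sm W' + (Sm W * Nm b₁' c₁'
            + (Nm b₁ c₁ * Sm W' + Nm b₁ c₁ * Nm b₁' c₁')) := by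
        rw [mul_add, add_mul, add_mul]; abel
      have p2 : (Sm W' + Nm b₁' c₁') * (Sm W + Nm b₁ c₁)
          = Sm W' * Sm W + (Sm W' * Nm b₁ c₁
            + (Nm b₁' c₁' * Sm W + Nm b₁' c₁' * Nm b₁ c₁)) := by
        rw [mul_add, add_mul, add_mul]; abel
      rw [p1, p2, e0 (Sm W'), e0 (Nm b₁' c₁'), ← e0' (Nm b₁ c₁)]
      abel
    rw [expand, Nm_bracket b₁ c₁ b₁' c₁' hcb' hc'b]

lemma End_pow_p (p : ℕ) [CharP F p] (hpp : p.Prime)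
    (x : Matrix (Fin 2) (Fin 2) (GrAlg F)) :
    (LinearMap.mulRight F x - LinearMap.mulLeft F x) ^ p
      = LinearMap.mulRight F (x ^ p) - LinearMap.mulLeft F (x ^ p) := by
  haveI : Fact p.Prime := ⟨hpp⟩
  haveI : CharP (GrAlg F) p := charP_grAlg p
  haveI : CharP (Matrix (Fin 2) (Fin 2) (GrAlg F)) p := inferInstance
  have hinj : Function.Injective
      (Algebra.lmul F (Matrix (Fin 2) (Fin 2) (GrAlg F))).toRingHom := by
    intro a b h
    have h' := congrArg (fun f : Module.End F (Matrix (Fin 2) (Fin 2) (GrAlg F)) => f 1) h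
    simpa using h'
  haveI : CharP (Module.End F (Matrix (Fin 2) (Fin 2) (GrAlg F))) p :=
    charP_of_injective_ringHom hinj p
  rw [sub_pow_expChar_of_commute p ((LinearMap.commute_mulLeft_right x x).symm),
    LinearMap.pow_mulRight, LinearMap.pow_mulLeft]

lemma lnb_replicate (z x : Matrix (Fin 2) (Fin 2) (GrAlg F)) (n : ℕ) :
    lnb z (List.replicate n x)
      = ((LinearMap.mulRight F x - LinearMap.mulLeft F x) ^ n) z := by
  induction n generalizing z with
  | zero => simp [lnb]
  | succ n ih =>
    rw [List.replicate_succ]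
    show lnb ⁅z, x⁆ (List.replicate n x) = _
    rw [ih, pow_succ, Module.End.mul_apply]
    have h' : (LinearMap.mulRight F x - LinearMap.mulLeft F x) z = ⁅z, x⁆ := by
      simp [Ring.lie_def, LinearMap.sub_apply]
    rw [h']

end Stmt18Aux

/-- In the adjoint Lie algebra of `M_{1,1}(E)` over a field of characteristic
`p > 2`, the identity `[x,y,x^(p-1),y^(p-1),v] = 0` holds. -/
theorem stmt18 (F : Type) [Field F] (p : ℕ) (hp : 2 < p) [CharP F p]
    (x y v : Matrix (Fin 2) (Fin 2) (GrAlg F))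
    (hx : x ∈ M11carrier F (evenPart F)) (hy : y ∈ M11carrier F (evenPart F))
    (hv : v ∈ M11carrier F (evenPart F)) :
    lnb ⁅x, y⁆ (List.replicate (p - 1) x ++ List.replicate (p - 1) y ++ [v]) = 0 := by
  have hpp : p.Prime := (CharP.char_is_prime_or_zero F p).resolve_right (by omega)
  have hp1 : p - 1 + 1 = p := by omega
  obtain ⟨s, hsc, hs⟩ := Stmt18Aux.lie_pow_pow p hp hpp hx hy
  have h1 : lnb ⁅x, y⁆ (List.replicate (p - 1) x) = ⁅x ^ p, y⁆ := by
    rw [Stmt18Aux.lnb_replicate]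
    have hxy : ⁅x, y⁆ = -((LinearMap.mulRight F x - LinearMap.mulLeft F x) y) := by
      simp [Ring.lie_def, LinearMap.sub_apply]
    rw [hxy, map_neg, ← Module.End.mul_apply, ← pow_succ, hp1,
      Stmt18Aux.End_pow_p p hpp x]
    simp [Ring.lie_def, LinearMap.sub_apply]
  have h2 : lnb ⁅x ^ p, y⁆ (List.replicate (p - 1) y) = ⁅x ^ p, y ^ p⁆ := by
    rw [Stmt18Aux.lnb_replicate]
    have hxy : ⁅x ^ p, y⁆
        = (LinearMap.mulRight F y - LinearMap.mulLeft F y) (x ^ p) := by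
      simp [Ring.lie_def, LinearMap.sub_apply]
    rw [hxy, ← Module.End.mul_apply, ← pow_succ, hp1, Stmt18Aux.End_pow_p p hpp y]
    simp [Ring.lie_def, LinearMap.sub_apply]
  calc lnb ⁅x, y⁆ (List.replicate (p - 1) x ++ List.replicate (p - 1) y ++ [v])
      = lnb (lnb (lnb ⁅x, y⁆ (List.replicate (p - 1) x))
          (List.replicate (p - 1) y)) [v] := by
        simp only [lnb, List.foldl_append]
    _ = ⁅⁅x ^ p, y ^ p⁆, v⁆ := by rw [h1, h2]; rfl
    _ = 0 := by rw [hs]; exact Stmt18Aux.central_bracket hsc v
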